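/- arXiv:2110.04401 — 4 statements merged into one kernel-verified Lean document; each statement's English description precedes it below -/
import Mathlib

section
/- For all block indices 1 ≤ i, j ≤ (N+1)/2, the (i,j)-th Nr×Nt block of the virtual channel matrix equals the subcarrier channel matrix of index i+j−2; that is, H_v^{(i,j)} = H^{(i+j−2)}. -/
/- STATEMENT 0: For all block indices 1 ≤ i, j ≤ (N+1)/2, the (i,j)-th Nr×Nt block of the
virtual channel matrix equals the subcarrier channel matrix of index i+j−2;
that is, H_v^{(i,j)} = H^{(i+j−2)}.
We write N = 2*m+1 (N ≥ 3 odd), so (N+1)/2 = m+1, and use 0-based indices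
i, j : Fin (m+1); then the claim reads H_v^{(i,j)} = H^{(i+j)}.  Blocks are encoded
by indexing H_v with the product type Fin (m+1) × Fin Nr (rows) and
Fin (m+1) × Fin Nt (columns). -/

open scoped BigOperators

/-- `ξ(t) ∈ ℂ^{(N+1)/2}`, with `ξ(t)_i = √(2/(N+1)) e^{−j2π(i−1)t/(N Ts)}` (1-based `i`). -/
noncomputable def xiVec (m N : ℕ) (Ts t : ℝ) : Fin (m + 1) → ℂ := fun i =>
  (Real.sqrt (2 / ((N : ℝ) + 1)) : ℂ) *
    Complex.exp (((-(2 * Real.pi * (i : ℝ) * t / ((N : ℝ) * Ts))) : ℝ) * Complex.I)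

/-- The `n`-th subcarrier channel matrix
`H^{(n)} = Σ_{k=0}^K γ_k e^{−j2π n τ_k/(N Ts)} α_k β_k^H ∈ ℂ^{Nr×Nt}`. -/
noncomputable def Hsub (Nr Nt K N : ℕ) (Ts : ℝ) (γ : Fin (K + 1) → ℂ)
    (τ : Fin (K + 1) → ℝ) (α : Fin (K + 1) → Fin Nr → ℂ)
    (β : Fin (K + 1) → Fin Nt → ℂ) (n : ℕ) : Matrix (Fin Nr) (Fin Nt) ℂ :=
  ∑ k, (γ k *
      Complex.exp (((-(2 * Real.pi * (n : ℝ) * τ k / ((N : ℝ) * Ts))) : ℝ) * Complex.I)) •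
    Matrix.vecMulVec (α k) (fun t => (starRingEnd ℂ) (β k t))

/-- The virtual channel matrix
`H_v = Σ_{k=0}^K l_k (ξ(τ_k) ⊗ α_k)(ξ(−τ_k) ⊗ β_k)^H`, with `l_k = (N+1)γ_k/2`,
indexed by `Fin (m+1) × Fin Nr` and `Fin (m+1) × Fin Nt` (Kronecker product indexing). -/
noncomputable def Hvirt (m Nr Nt K N : ℕ) (Ts : ℝ) (γ : Fin (K + 1) → ℂ)
    (τ : Fin (K + 1) → ℝ) (α : Fin (K + 1) → Fin Nr → ℂ)
    (β : Fin (K + 1) → Fin Nt → ℂ) :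
    Matrix (Fin (m + 1) × Fin Nr) (Fin (m + 1) × Fin Nt) ℂ :=
  ∑ k, ((((N : ℂ) + 1) / 2) * γ k) •
    Matrix.vecMulVec (fun p => xiVec m N Ts (τ k) p.1 * α k p.2)
      (fun q => (starRingEnd ℂ) (xiVec m N Ts (-(τ k)) q.1 * β k q.2))

theorem virtual_block_eq_subcarrier (m : ℕ) (hm : 1 ≤ m) (N : ℕ) (hN : N = 2 * m + 1)
    (Ts : ℝ) (hTs : 0 < Ts) (Nr Nt : ℕ) (hNr : 1 ≤ Nr) (hNt : 1 ≤ Nt) (K : ℕ)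
    (γ : Fin (K + 1) → ℂ) (τ : Fin (K + 1) → ℝ)
    (α : Fin (K + 1) → Fin Nr → ℂ) (β : Fin (K + 1) → Fin Nt → ℂ) :
    ∀ (i j : Fin (m + 1)) (r : Fin Nr) (t : Fin Nt),
      Hvirt m Nr Nt K N Ts γ τ α β (i, r) (j, t) =
        Hsub Nr Nt K N Ts γ τ α β ((i : ℕ) + (j : ℕ)) r t := by
  intro i j r t
  have hc : ((Real.sqrt (2 / ((N : ℝ) + 1)) : ℂ)) * ((Real.sqrt (2 / ((N : ℝ) + 1)) : ℂ))
      = ((2 / ((N : ℝ) + 1) : ℝ) : ℂ) := by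
    rw [← Complex.ofReal_mul, Real.mul_self_sqrt (by positivity)]
  have hN1 : ((N : ℂ) + 1) ≠ 0 := by
    have := Nat.cast_ne_zero (R := ℂ) |>.mpr (Nat.succ_ne_zero N)
    push_cast at this
    exact this
  simp only [Hvirt, Hsub, Matrix.sum_apply, Matrix.smul_apply, Matrix.vecMulVec_apply,
    smul_eq_mul, xiVec, map_mul]
  refine Finset.sum_congr rfl fun k _ => ?_
  rw [show (starRingEnd ℂ) ((Real.sqrt (2 / ((N : ℝ) + 1)) : ℂ)) =
      ((Real.sqrt (2 / ((N : ℝ) + 1)) : ℂ)) from Complex.conj_ofReal _]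
  have hconj : (starRingEnd ℂ) ((((-(2 * Real.pi * (j : ℝ) * (-(τ k)) / ((N : ℝ) * Ts))) : ℝ) * Complex.I))
      = (((-(2 * Real.pi * (j : ℝ) * (τ k) / ((N : ℝ) * Ts))) : ℝ) * Complex.I) := by
    rw [map_mul, Complex.conj_ofReal, Complex.conj_I]
    push_cast
    ring
  rw [← Complex.exp_conj, hconj]
  have hexp : Complex.exp (((-(2 * Real.pi * (i : ℝ) * τ k / ((N : ℝ) * Ts))) : ℝ) * Complex.I) *
      Complex.exp (((-(2 * Real.pi * (j : ℝ) * τ k / ((N : ℝ) * Ts))) : ℝ) * Complex.I) =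
      Complex.exp (((-(2 * Real.pi * (((i : ℕ) + (j : ℕ) : ℕ) : ℝ) * τ k / ((N : ℝ) * Ts))) : ℝ) * Complex.I) := by
    rw [← Complex.exp_add]
    congr 1
    push_cast
    ring
  rw [← hexp]
  have h2 : ((2 / ((N : ℝ) + 1) : ℝ) : ℂ) = 2 / ((N : ℂ) + 1) := by push_cast; ring
  rw [h2] at hc
  have key : (((N : ℂ) + 1) / 2) * (2 / ((N : ℂ) + 1)) = 1 := by
    field_simp
  linear_combination ((((N : ℂ) + 1) / 2) * γ k *
      Complex.exp (((-(2 * Real.pi * (i : ℝ) * τ k / ((N : ℝ) * Ts))) : ℝ) * Complex.I) *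
      Complex.exp (((-(2 * Real.pi * (j : ℝ) * τ k / ((N : ℝ) * Ts))) : ℝ) * Complex.I) *
      α k r * (starRingEnd ℂ) (β k t)) * hc +
    (γ k * Complex.exp (((-(2 * Real.pi * (i : ℝ) * τ k / ((N : ℝ) * Ts))) : ℝ) * Complex.I) *
      Complex.exp (((-(2 * Real.pi * (j : ℝ) * τ k / ((N : ℝ) * Ts))) : ℝ) * Complex.I) *
      α k r * (starRingEnd ℂ) (β k t)) * key
end

section
/- The virtual channel matrix is block Hankel: for all block indices 1 ≤ i, j, k, z ≤ (N+1)/2 with i+j = k+z, the Nr×Nt blocks satisfy H_v^{(i,j)} = H_v^{(k,z)}. -/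
/- STATEMENT 1: The virtual channel matrix is block Hankel: for all block indices
1 ≤ i, j, k, z ≤ (N+1)/2 with i+j = k+z, the Nr×Nt blocks satisfy H_v^{(i,j)} = H_v^{(k,z)}.
We write N = 2*m+1 (N ≥ 3 odd), so (N+1)/2 = m+1, and use 0-based block indices in
Fin (m+1); blocks are encoded by indexing H_v with product types. -/

open scoped BigOperators

theorem virtual_channel_block_hankel (m : ℕ) (hm : 1 ≤ m) (N : ℕ) (hN : N = 2 * m + 1)
    (Ts : ℝ) (hTs : 0 < Ts) (Nr Nt : ℕ) (hNr : 1 ≤ Nr) (hNt : 1 ≤ Nt) (K : ℕ)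
    (γ : Fin (K + 1) → ℂ) (τ : Fin (K + 1) → ℝ)
    (α : Fin (K + 1) → Fin Nr → ℂ) (β : Fin (K + 1) → Fin Nt → ℂ) :
    ∀ (i j k z : Fin (m + 1)), (i : ℕ) + (j : ℕ) = (k : ℕ) + (z : ℕ) →
      ∀ (r : Fin Nr) (t : Fin Nt),
        Hvirt m Nr Nt K N Ts γ τ α β (i, r) (j, t) =
          Hvirt m Nr Nt K N Ts γ τ α β (k, r) (z, t) := by
  intro i j k z hij r t
  have hij' : (i : ℝ) + (j : ℝ) = (k : ℝ) + (z : ℝ) := by exact_mod_cast hij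
  have key : ∀ (a b : Fin (m + 1)) (p : Fin (K + 1)),
      Complex.exp (((-(2 * Real.pi * (a : ℝ) * τ p / ((N : ℝ) * Ts))) : ℝ) * Complex.I) *
        (starRingEnd ℂ)
          (Complex.exp (((-(2 * Real.pi * (b : ℝ) * (-(τ p)) / ((N : ℝ) * Ts))) : ℝ) *
            Complex.I)) =
      Complex.exp (((-(2 * Real.pi * ((a : ℝ) + (b : ℝ)) * τ p / ((N : ℝ) * Ts))) : ℝ) *
        Complex.I) := by
    intro a b p
    rw [← Complex.exp_conj, map_mul, Complex.conj_ofReal, Complex.conj_I, mul_neg,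
      ← Complex.exp_add]
    congr 1
    push_cast
    ring
  unfold Hvirt
  simp only [Matrix.sum_apply, Matrix.smul_apply, Matrix.vecMulVec_apply, xiVec,
    map_mul, Complex.conj_ofReal, smul_eq_mul]
  refine Finset.sum_congr rfl fun p _ => ?_
  have h1 := key i j p
  have h2 := key k z p
  have h3 : Complex.exp (((-(2 * Real.pi * ((i : ℝ) + (j : ℝ)) * τ p / ((N : ℝ) * Ts))) : ℝ) *
        Complex.I) =
      Complex.exp (((-(2 * Real.pi * ((k : ℝ) + (z : ℝ)) * τ p / ((N : ℝ) * Ts))) : ℝ) *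
        Complex.I) := by rw [hij']
  linear_combination ((((N : ℂ) + 1) / 2) * γ p *
    (Real.sqrt (2 / ((N : ℝ) + 1)) : ℂ) * (Real.sqrt (2 / ((N : ℝ) + 1)) : ℂ) *
    α p r * (starRingEnd ℂ) (β p t)) * (h1 - h2 + h3)
end

section
/- Suppose γ_k ≠ 0 for every k = 0,…,K, the vectors α_0,…,α_K ∈ ℂ^{Nr} are linearly independent, and the vectors β_0,…,β_K ∈ ℂ^{Nt} are linearly independent. Then rank(H_v) = K+1 and, for every 0 ≤ n ≤ N−1, rank(H^{(n)}) = K+1; in particular H_v has the same rank as each subcarrier channel matrix H^{(n)}. -/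
/- STATEMENT 4: Suppose γ_k ≠ 0 for every k, the vectors α_0,…,α_K are linearly independent,
and the vectors β_0,…,β_K are linearly independent. Then rank(H_v) = K+1 and, for every
0 ≤ n ≤ N−1, rank(H^{(n)}) = K+1; in particular H_v has the same rank as each subcarrier
channel matrix H^{(n)}.  We write N = 2*m+1 (N ≥ 3 odd), so (N+1)/2 = m+1. -/

open scoped BigOperators

open Matrix in
open scoped ComplexOrder in
lemma rank_sum_smul_vecMulVec {r : ℕ} {n p : Type*} [Fintype n] [Fintype p]
    (a : Fin r → n → ℂ) (b : Fin r → p → ℂ)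
    (c : Fin r → ℂ) (hc : ∀ k, c k ≠ 0)
    (ha : LinearIndependent ℂ a) (hb : LinearIndependent ℂ b) :
    (∑ k, c k • Matrix.vecMulVec (a k) (fun t => (starRingEnd ℂ) (b k t))).rank = r := by
  classical
  set A : Matrix n (Fin r) ℂ := Matrix.of fun i k => c k * a k i with hA
  set B : Matrix p (Fin r) ℂ := Matrix.of fun t k => b k t with hB
  have hM : (∑ k, c k • Matrix.vecMulVec (a k) (fun t => (starRingEnd ℂ) (b k t))) = A * Bᴴ := by
    ext i t
    simp only [Matrix.sum_apply, Matrix.smul_apply, Matrix.vecMulVec_apply, Matrix.mul_apply,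
      Matrix.conjTranspose_apply, hA, hB, Matrix.of_apply, smul_eq_mul]
    simp only [starRingEnd_apply]
    refine Finset.sum_congr rfl fun k _ => by ring
  rw [hM]
  have hAinj : Function.Injective A.mulVecLin := by
    rw [← LinearMap.ker_eq_bot, LinearMap.ker_eq_bot']
    intro v hv
    have hsum : ∑ k, (c k * v k) • a k = 0 := by
      funext i
      have := congrFun hv i
      simpa [Matrix.mulVecLin_apply, Matrix.mulVec, dotProduct, hA, Finset.sum_apply,
        mul_assoc, mul_left_comm, mul_comm] using this
    have := Fintype.linearIndependent_iff.mp ha _ hsum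
    funext k
    have h := this k
    exact (mul_eq_zero.mp h).resolve_left (hc k)
  have hBinj : Function.Injective B.mulVecLin := by
    rw [← LinearMap.ker_eq_bot, LinearMap.ker_eq_bot']
    intro v hv
    have hsum : ∑ k, v k • b k = 0 := by
      funext t
      have := congrFun hv t
      simpa [Matrix.mulVecLin_apply, Matrix.mulVec, dotProduct, hB, Finset.sum_apply,
        mul_comm] using this
    funext k
    exact Fintype.linearIndependent_iff.mp hb _ hsum k
  have hG : Function.Injective (Bᴴ * B).mulVecLin := by
    rw [← LinearMap.ker_eq_bot, LinearMap.ker_eq_bot']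
    intro v hv
    have : B *ᵥ v = 0 := (Matrix.conjTranspose_mul_self_mulVec_eq_zero B v).mp hv
    exact hBinj (by simpa [Matrix.mulVecLin_apply] using this)
  have hGsurj : Function.Surjective (Bᴴ * B).mulVecLin :=
    (LinearMap.injective_iff_surjective_of_finrank_eq_finrank rfl).mp hG
  have hBHsurj : Function.Surjective Bᴴ.mulVecLin := by
    intro y
    obtain ⟨x, hx⟩ := hGsurj y
    exact ⟨B *ᵥ x, by simpa [Matrix.mulVecLin_apply, Matrix.mulVec_mulVec] using hx⟩
  have hrange : LinearMap.range (A * Bᴴ).mulVecLin = LinearMap.range A.mulVecLin := by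
    rw [Matrix.mulVecLin_mul]
    exact LinearMap.range_comp_of_range_eq_top _ (LinearMap.range_eq_top.mpr hBHsurj)
  rw [Matrix.rank, hrange, LinearMap.finrank_range_of_inj hAinj, Module.finrank_fin_fun]

lemma xiVec_zero (m N : ℕ) (Ts t : ℝ) :
    xiVec m N Ts t 0 = (Real.sqrt (2 / ((N : ℝ) + 1)) : ℂ) := by
  simp [xiVec]

lemma li_kron {r n : ℕ} (m N : ℕ) (Ts : ℝ) (τ : Fin r → ℝ)
    (α : Fin r → Fin n → ℂ) (hα : LinearIndependent ℂ α) :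
    LinearIndependent ℂ
      (fun k => fun p : Fin (m + 1) × Fin n => xiVec m N Ts (τ k) p.1 * α k p.2) := by
  rw [Fintype.linearIndependent_iff] at hα ⊢
  intro g hg k
  set c0 : ℂ := (Real.sqrt (2 / ((N : ℝ) + 1)) : ℂ) with hc0
  have hc0ne : c0 ≠ 0 := by
    rw [hc0]
    simp only [ne_eq, Complex.ofReal_eq_zero]
    refine Real.sqrt_ne_zero'.mpr (by positivity)
  have hsum : ∑ k, (g k * c0) • α k = 0 := by
    funext i
    have h1 := congrFun hg ((0 : Fin (m + 1)), i)
    simp only [Finset.sum_apply, Pi.smul_apply, smul_eq_mul, Pi.zero_apply, xiVec_zero,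
      ← hc0] at h1
    simp only [Finset.sum_apply, Pi.smul_apply, smul_eq_mul, Pi.zero_apply]
    rw [← h1]
    exact Finset.sum_congr rfl fun k _ => by ring
  have := hα _ hsum k
  exact (mul_eq_zero.mp this).resolve_right hc0ne

theorem virtual_and_subcarrier_rank_eq (m : ℕ) (hm : 1 ≤ m) (N : ℕ) (hN : N = 2 * m + 1)
    (Ts : ℝ) (hTs : 0 < Ts) (Nr Nt : ℕ) (hNr : 1 ≤ Nr) (hNt : 1 ≤ Nt) (K : ℕ)
    (γ : Fin (K + 1) → ℂ) (τ : Fin (K + 1) → ℝ)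
    (α : Fin (K + 1) → Fin Nr → ℂ) (β : Fin (K + 1) → Fin Nt → ℂ)
    (hγ : ∀ k, γ k ≠ 0)
    (hα : LinearIndependent ℂ α) (hβ : LinearIndependent ℂ β) :
    (Hvirt m Nr Nt K N Ts γ τ α β).rank = K + 1 ∧
      ∀ n : ℕ, n ≤ N - 1 → (Hsub Nr Nt K N Ts γ τ α β n).rank = K + 1 := by
  constructor
  · unfold Hvirt
    refine rank_sum_smul_vecMulVec _ _ _ ?_ ?_ ?_
    · intro k
      refine mul_ne_zero (div_ne_zero ?_ two_ne_zero) (hγ k)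
      have h1 : ((N : ℂ) + 1) = ((N + 1 : ℕ) : ℂ) := by push_cast; ring
      rw [h1]
      exact_mod_cast Nat.succ_ne_zero N
    · exact li_kron m N Ts τ α hα
    · exact li_kron m N Ts (fun k => -(τ k)) β hβ
  · intro nn _
    unfold Hsub
    refine rank_sum_smul_vecMulVec _ _ _ ?_ hα hβ
    intro k
    exact mul_ne_zero (hγ k) (Complex.exp_ne_zero _)
end

section
/- For every matrix M ∈ ℂ^{((N+1)/2)Nr × ((N+1)/2)Nt} that admits at least one finite atomic decomposition M = Σ_k l̃_k A(τ_k, f_{r,k}, f_{t,k}), one has SDP(M) ≤ ‖M‖_𝒜, where SDP(M) = inf { (Tr(T_U) + Tr(T_V))/2 : T_U, T_V Hermitian 2-level Toeplitz matrices of respective sizes ((N+1)/2)Nr and ((N+1)/2)Nt such that the block matrix [[T_U, M],[M^H, T_V]] is positive semidefinite }. -/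
/- STATEMENT 9: For every matrix M ∈ ℂ^{((N+1)/2)Nr × ((N+1)/2)Nt} that admits at least one
finite atomic decomposition M = Σ_k l̃_k A(τ_k, f_{r,k}, f_{t,k}), one has SDP(M) ≤ ‖M‖_𝒜,
where SDP(M) = inf { (Tr(T_U) + Tr(T_V))/2 : T_U, T_V Hermitian 2-level Toeplitz matrices
such that [[T_U, M],[M^H, T_V]] ⪰ 0 } and ‖M‖_𝒜 = inf { Σ_k |l̃_k| : M = Σ_k l̃_k A_k }.
We write N = 2*m+1 (N ≥ 3 odd), so (N+1)/2 = m+1; Kronecker products are encoded via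
product index types; infima over sets of real values are taken via sInf. -/

open scoped BigOperators ComplexOrder

/-- The normalized steering vector `a(f) ∈ ℂ^M`, `a(f)_i = (1/√M) e^{−j2π(i−1)f}`. -/
noncomputable def steerVec (M : ℕ) (f : ℝ) : Fin M → ℂ := fun i =>
  (1 / (Real.sqrt M) : ℂ) *
    Complex.exp (((-(2 * Real.pi * (i : ℝ) * f)) : ℝ) * Complex.I)

/-- `χ(τ, f_r) = ξ(τ) ⊗ α(f_r)`. -/
noncomputable def chiVec (m Nr N : ℕ) (Ts τ fr : ℝ) : Fin (m + 1) × Fin Nr → ℂ :=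
  fun p => xiVec m N Ts τ p.1 * steerVec Nr fr p.2

/-- `ζ(τ, f_t) = ξ(−τ) ⊗ β(f_t)`. -/
noncomputable def zetaVec (m Nt N : ℕ) (Ts τ ft : ℝ) : Fin (m + 1) × Fin Nt → ℂ :=
  fun q => xiVec m N Ts (-τ) q.1 * steerVec Nt ft q.2

/-- The atom `A(τ, f_r, f_t) = χ(τ,f_r) ζ(τ,f_t)^H`. -/
noncomputable def atomMat (m Nr Nt N : ℕ) (Ts τ fr ft : ℝ) :
    Matrix (Fin (m + 1) × Fin Nr) (Fin (m + 1) × Fin Nt) ℂ :=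
  Matrix.vecMulVec (chiVec m Nr N Ts τ fr)
    (fun q => (starRingEnd ℂ) (zetaVec m Nt N Ts τ ft q))

/-- A square matrix indexed by pairs is 2-level Toeplitz if its entry at ((i1,i2),(j1,j2))
depends only on (i1−j1, i2−j2). -/
def IsTwoLevelToeplitz {a b : ℕ} (T : Matrix (Fin a × Fin b) (Fin a × Fin b) ℂ) : Prop :=
  ∀ (i1 j1 i1' j1' : Fin a) (i2 j2 i2' j2' : Fin b),
    (i1 : ℤ) - (j1 : ℤ) = (i1' : ℤ) - (j1' : ℤ) →
    (i2 : ℤ) - (j2 : ℤ) = (i2' : ℤ) - (j2' : ℤ) →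
    T (i1, i2) (j1, j2) = T (i1', i2') (j1', j2')

/-- The values `Σ_k |l̃_k|` over all finite atomic decompositions of `M` with parameters
`τ_k/(N Ts) ∈ (0,1]`, `f_{r,k}, f_{t,k} ∈ (−1/2,1/2]`; the atomic norm `‖M‖_𝒜` is the
infimum of this set. -/
def atomicDecompSums (m Nr Nt N : ℕ) (Ts : ℝ)
    (M : Matrix (Fin (m + 1) × Fin Nr) (Fin (m + 1) × Fin Nt) ℂ) : Set ℝ :=
  { s | ∃ (n : ℕ) (l : Fin n → ℂ) (τ fr ft : Fin n → ℝ),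
      (∀ k, τ k / ((N : ℝ) * Ts) ∈ Set.Ioc (0 : ℝ) 1) ∧
      (∀ k, fr k ∈ Set.Ioc (-(1 / 2) : ℝ) (1 / 2)) ∧
      (∀ k, ft k ∈ Set.Ioc (-(1 / 2) : ℝ) (1 / 2)) ∧
      M = ∑ k, l k • atomMat m Nr Nt N Ts (τ k) (fr k) (ft k) ∧
      s = ∑ k, ‖l k‖ }

/-- The feasible values `(Tr(T_U) + Tr(T_V))/2` of the semidefinite program, over Hermitian
2-level Toeplitz `T_U`, `T_V` making the block matrix `[[T_U, M],[M^H, T_V]]` PSD;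
`SDP(M)` is the infimum of this set. -/
def sdpVals (m Nr Nt : ℕ)
    (M : Matrix (Fin (m + 1) × Fin Nr) (Fin (m + 1) × Fin Nt) ℂ) : Set ℝ :=
  { s | ∃ (TU : Matrix (Fin (m + 1) × Fin Nr) (Fin (m + 1) × Fin Nr) ℂ)
          (TV : Matrix (Fin (m + 1) × Fin Nt) (Fin (m + 1) × Fin Nt) ℂ),
      TU.IsHermitian ∧ TV.IsHermitian ∧
      IsTwoLevelToeplitz TU ∧ IsTwoLevelToeplitz TV ∧
      (Matrix.fromBlocks TU M M.conjTranspose TV).PosSemidef ∧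
      s = (((TU.trace + TV.trace) / 2).re) }

open scoped BigOperators ComplexOrder
open Matrix

lemma mul_conj_exp' (a b : ℝ) :
    Complex.exp ((a:ℂ) * Complex.I) * (starRingEnd ℂ) (Complex.exp ((b:ℂ) * Complex.I)) =
    Complex.exp (((a - b : ℝ) : ℂ) * Complex.I) := by
  rw [← Complex.exp_conj, _root_.map_mul, Complex.conj_ofReal, Complex.conj_I, ← Complex.exp_add]
  push_cast; ring_nf

lemma posSemidef_vecMulVec_star' {n : Type*} [Fintype n] (v : n → ℂ) :
    (Matrix.vecMulVec v (star v)).PosSemidef := by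
  constructor
  · ext i j
    simp [Matrix.vecMulVec_apply, Matrix.conjTranspose_apply, mul_comm]
  · exact (Matrix.posSemidef_vecMulVec_self_star v).2

lemma psd_diag_nonneg' {n : Type*} [Fintype n] [DecidableEq n] {A : Matrix n n ℂ}
    (hA : A.PosSemidef) (i : n) : 0 ≤ A i i := by
  exact hA.diag_nonneg

lemma psd_trace_re_nonneg' {n : Type*} [Fintype n] [DecidableEq n] {A : Matrix n n ℂ}
    (hA : A.PosSemidef) : 0 ≤ A.trace.re := by
  have h : (0:ℂ) ≤ A.trace := by
    rw [Matrix.trace]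
    exact Finset.sum_nonneg fun i _ => psd_diag_nonneg' hA i
  exact (Complex.le_def.mp h).1
open Matrix

lemma xi_mul_conj (m N : ℕ) (Ts t : ℝ) (i j : Fin (m+1)) :
    xiVec m N Ts t i * (starRingEnd ℂ) (xiVec m N Ts t j) =
    ((Real.sqrt (2 / ((N:ℝ)+1)) * Real.sqrt (2 / ((N:ℝ)+1)) : ℝ) : ℂ) *
      Complex.exp ((((-(2*Real.pi*(i:ℝ)*t/((N:ℝ)*Ts))) - (-(2*Real.pi*(j:ℝ)*t/((N:ℝ)*Ts))) : ℝ) : ℂ) * Complex.I) := by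
  unfold xiVec
  rw [_root_.map_mul, Complex.conj_ofReal, mul_mul_mul_comm, mul_conj_exp']
  push_cast
  ring

lemma xi_diff (m N : ℕ) (Ts t : ℝ) {i j i' j' : Fin (m+1)} (h : (i:ℝ) - (j:ℝ) = (i':ℝ) - (j':ℝ)) :
    xiVec m N Ts t i * (starRingEnd ℂ) (xiVec m N Ts t j) =
    xiVec m N Ts t i' * (starRingEnd ℂ) (xiVec m N Ts t j') := by
  rw [xi_mul_conj, xi_mul_conj]
  have harg : ((-(2*Real.pi*(i:ℝ)*t/((N:ℝ)*Ts))) - (-(2*Real.pi*(j:ℝ)*t/((N:ℝ)*Ts))) : ℝ)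
      = ((-(2*Real.pi*(i':ℝ)*t/((N:ℝ)*Ts))) - (-(2*Real.pi*(j':ℝ)*t/((N:ℝ)*Ts))) : ℝ) := by
    linear_combination (-(2*Real.pi*t/((N:ℝ)*Ts))) * h
  rw [harg]

lemma steer_coe (K : ℕ) : (1 / ((Real.sqrt K : ℝ) : ℂ)) = (((1/Real.sqrt K : ℝ)) : ℂ) := by
  push_cast; ring

lemma steer_mul_conj (K : ℕ) (f : ℝ) (i j : Fin K) :
    steerVec K f i * (starRingEnd ℂ) (steerVec K f j) =
    ((1/Real.sqrt K * (1/Real.sqrt K) : ℝ) : ℂ) *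
      Complex.exp ((((-(2*Real.pi*(i:ℝ)*f)) - (-(2*Real.pi*(j:ℝ)*f)) : ℝ) : ℂ) * Complex.I) := by
  unfold steerVec
  rw [steer_coe, _root_.map_mul, Complex.conj_ofReal, mul_mul_mul_comm, mul_conj_exp']
  push_cast
  ring

lemma steer_diff (K : ℕ) (f : ℝ) {i j i' j' : Fin K} (h : (i:ℝ) - (j:ℝ) = (i':ℝ) - (j':ℝ)) :
    steerVec K f i * (starRingEnd ℂ) (steerVec K f j) =
    steerVec K f i' * (starRingEnd ℂ) (steerVec K f j') := by
  rw [steer_mul_conj, steer_mul_conj]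
  have harg : ((-(2*Real.pi*(i:ℝ)*f)) - (-(2*Real.pi*(j:ℝ)*f)) : ℝ)
      = ((-(2*Real.pi*(i':ℝ)*f)) - (-(2*Real.pi*(j':ℝ)*f)) : ℝ) := by
    linear_combination (-(2*Real.pi*f)) * h
  rw [harg]

lemma prodvec_trace (m K N : ℕ) (hN : N = 2*m+1) (hK : 1 ≤ K) (Ts t f : ℝ) :
    ∑ p : Fin (m+1) × Fin K,
      (xiVec m N Ts t p.1 * steerVec K f p.2) *
        (starRingEnd ℂ) (xiVec m N Ts t p.1 * steerVec K f p.2) = (1:ℂ) := by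
  have hterm : ∀ p : Fin (m+1) × Fin K,
      (xiVec m N Ts t p.1 * steerVec K f p.2) *
        (starRingEnd ℂ) (xiVec m N Ts t p.1 * steerVec K f p.2)
      = ((2/((N:ℝ)+1) * (1/(K:ℝ)) : ℝ) : ℂ) := by
    intro p
    rw [Complex.mul_conj]
    congr 1
    unfold xiVec steerVec
    rw [steer_coe, Complex.normSq_mul, Complex.normSq_mul, Complex.normSq_mul]
    rw [Complex.normSq_ofReal, Complex.normSq_ofReal]
    have e1 : Complex.normSq (Complex.exp (((-(2 * Real.pi * ((p.1:Fin (m+1)):ℝ) * t / ((N : ℝ) * Ts))) : ℝ) * Complex.I)) = 1 := by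
      rw [← Complex.sq_norm, Complex.norm_exp_ofReal_mul_I]; norm_num
    have e2 : Complex.normSq (Complex.exp (((-(2 * Real.pi * ((p.2:Fin K):ℝ) * f)) : ℝ) * Complex.I)) = 1 := by
      rw [← Complex.sq_norm, Complex.norm_exp_ofReal_mul_I]; norm_num
    rw [e1, e2]
    have h1 : Real.sqrt (2 / ((N : ℝ) + 1)) * Real.sqrt (2 / ((N : ℝ) + 1)) = 2 / ((N:ℝ)+1) :=
      Real.mul_self_sqrt (by positivity)
    have h2 : (1/Real.sqrt K) * (1/Real.sqrt K) = 1/(K:ℝ) := by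
      rw [div_mul_div_comm, Real.mul_self_sqrt (by positivity), one_mul]
    calc Real.sqrt (2 / ((N : ℝ) + 1)) * Real.sqrt (2 / ((N : ℝ) + 1)) * 1 *
          (1 / Real.sqrt K * (1 / Real.sqrt K) * 1)
        = (Real.sqrt (2 / ((N : ℝ) + 1)) * Real.sqrt (2 / ((N : ℝ) + 1))) *
          ((1 / Real.sqrt K) * (1 / Real.sqrt K)) := by ring
      _ = 2/((N:ℝ)+1) * (1/(K:ℝ)) := by rw [h1, h2]
  rw [Finset.sum_congr rfl (fun p _ => hterm p), Finset.sum_const, Finset.card_univ]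
  rw [Fintype.card_prod, Fintype.card_fin, Fintype.card_fin, nsmul_eq_mul]
  have hKC : (K:ℂ) ≠ 0 := Nat.cast_ne_zero.mpr (by omega)
  subst hN
  push_cast
  have hNC : ((2*(m:ℂ)+1)+1) ≠ 0 := by
    intro h
    have : ((2*(m:ℝ)+1)+1) = 0 := by exact_mod_cast congrArg Complex.re h
    nlinarith [Nat.cast_nonneg (α := ℝ) m]
  field_simp
  ring
open Matrix

lemma fromBlocks_eq_sum_outer {ι P Q : Type*} [Fintype ι] [Fintype P] [Fintype Q]
    (l : ι → ℂ) (χ : ι → P → ℂ) (ζ : ι → Q → ℂ) :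
    Matrix.fromBlocks
      (∑ k, ((‖l k‖ : ℝ) : ℂ) • Matrix.vecMulVec (χ k) (star (χ k)))
      (∑ k, l k • Matrix.vecMulVec (χ k) (fun q => (starRingEnd ℂ) (ζ k q)))
      (∑ k, l k • Matrix.vecMulVec (χ k) (fun q => (starRingEnd ℂ) (ζ k q))).conjTranspose
      (∑ k, ((‖l k‖ : ℝ) : ℂ) • Matrix.vecMulVec (ζ k) (star (ζ k))) =
    ∑ k, Matrix.vecMulVec
      (Sum.elim (fun p => ((Real.sqrt (‖l k‖) : ℝ) : ℂ) *
          Complex.exp (((Complex.arg (l k) : ℝ) : ℂ) * Complex.I) * χ k p)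
        (fun q => ((Real.sqrt (‖l k‖) : ℝ) : ℂ) * ζ k q))
      (star (Sum.elim (fun p => ((Real.sqrt (‖l k‖) : ℝ) : ℂ) *
          Complex.exp (((Complex.arg (l k) : ℝ) : ℂ) * Complex.I) * χ k p)
        (fun q => ((Real.sqrt (‖l k‖) : ℝ) : ℂ) * ζ k q))) := by
  have hsq : ∀ k, ((Real.sqrt (‖l k‖) : ℝ) : ℂ) * ((Real.sqrt (‖l k‖) : ℝ) : ℂ)
      = ((‖l k‖ : ℝ) : ℂ) := by
    intro k
    rw [← Complex.ofReal_mul, Real.mul_self_sqrt (norm_nonneg _)]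
  have hu : ∀ k, Complex.exp (((Complex.arg (l k) : ℝ) : ℂ) * Complex.I) *
      (starRingEnd ℂ) (Complex.exp (((Complex.arg (l k) : ℝ) : ℂ) * Complex.I)) = 1 := by
    intro k
    rw [mul_conj_exp']
    simp
  have hlk : ∀ k, ((‖l k‖ : ℝ) : ℂ) *
      Complex.exp (((Complex.arg (l k) : ℝ) : ℂ) * Complex.I) = l k := fun k =>
    Complex.norm_mul_exp_arg_mul_I (l k)
  have hlk' : ∀ k, ((‖l k‖ : ℝ) : ℂ) *
      (starRingEnd ℂ) (Complex.exp (((Complex.arg (l k) : ℝ) : ℂ) * Complex.I)) =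
      (starRingEnd ℂ) (l k) := by
    intro k
    have := congrArg (starRingEnd ℂ) (hlk k)
    rwa [_root_.map_mul, Complex.conj_ofReal] at this
  ext i j
  cases i with
  | inl p =>
    cases j with
    | inl p' =>
      simp only [Matrix.fromBlocks_apply₁₁, Matrix.sum_apply, Matrix.smul_apply,
        Matrix.vecMulVec_apply, Pi.star_apply, Sum.elim_inl, smul_eq_mul, _root_.map_mul,
        Complex.conj_ofReal, Complex.star_def]
      refine Finset.sum_congr rfl fun k _ => ?_
      linear_combination (-(χ k p * (starRingEnd ℂ) (χ k p') *
          (Complex.exp (((Complex.arg (l k) : ℝ) : ℂ) * Complex.I) *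
           (starRingEnd ℂ) (Complex.exp (((Complex.arg (l k) : ℝ) : ℂ) * Complex.I))))) * hsq k +
        (-(((‖l k‖ : ℝ) : ℂ) * (χ k p * (starRingEnd ℂ) (χ k p')))) * hu k
    | inr q =>
      simp only [Matrix.fromBlocks_apply₁₂, Matrix.sum_apply, Matrix.smul_apply,
        Matrix.vecMulVec_apply, Pi.star_apply, Sum.elim_inl, Sum.elim_inr, smul_eq_mul,
        _root_.map_mul, Complex.conj_ofReal, Complex.star_def]
      refine Finset.sum_congr rfl fun k _ => ?_
      linear_combination (-(χ k p * (starRingEnd ℂ) (ζ k q) *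
          Complex.exp (((Complex.arg (l k) : ℝ) : ℂ) * Complex.I))) * hsq k +
        (-(χ k p * (starRingEnd ℂ) (ζ k q))) * hlk k
  | inr q =>
    cases j with
    | inl p =>
      simp only [Matrix.fromBlocks_apply₂₁, Matrix.sum_apply, Matrix.smul_apply,
        Matrix.vecMulVec_apply, Pi.star_apply, Sum.elim_inl, Sum.elim_inr, smul_eq_mul,
        Matrix.conjTranspose_apply, map_sum, _root_.map_mul, Complex.conj_ofReal,
        Complex.conj_conj, Complex.star_def]
      refine Finset.sum_congr rfl fun k _ => ?_
      linear_combination (-((starRingEnd ℂ) (χ k p) * ζ k q *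
          (starRingEnd ℂ) (Complex.exp (((Complex.arg (l k) : ℝ) : ℂ) * Complex.I)))) * hsq k +
        (-((starRingEnd ℂ) (χ k p) * ζ k q)) * hlk' k
    | inr q' =>
      simp only [Matrix.fromBlocks_apply₂₂, Matrix.sum_apply, Matrix.smul_apply,
        Matrix.vecMulVec_apply, Pi.star_apply, Sum.elim_inr, smul_eq_mul, _root_.map_mul,
        Complex.conj_ofReal, Complex.star_def]
      refine Finset.sum_congr rfl fun k _ => ?_
      linear_combination (-(ζ k q * (starRingEnd ℂ) (ζ k q'))) * hsq k
open Matrix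

lemma posSemidef_sum' {ι n : Type*} [Fintype ι] [Fintype n] (f : ι → Matrix n n ℂ)
    (h : ∀ k, (f k).PosSemidef) : (∑ k, f k).PosSemidef := by
  classical
  refine Finset.sum_induction f _ (fun a b ha hb => ha.add hb) Matrix.PosSemidef.zero
    (fun k _ => h k)

lemma isHermitian_sum_smul' {ι n : Type*} [Fintype ι] [Fintype n] (c : ι → ℝ) (v : ι → n → ℂ) :
    (∑ k, ((c k : ℝ) : ℂ) • Matrix.vecMulVec (v k) (star (v k))).IsHermitian := by
  have hk : ∀ k, (((c k : ℝ) : ℂ) • Matrix.vecMulVec (v k) (star (v k))).IsHermitian := by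
    intro k
    have h := (posSemidef_vecMulVec_star' (v k)).1
    unfold Matrix.IsHermitian at h ⊢
    rw [Matrix.conjTranspose_smul, h, Complex.star_def, Complex.conj_ofReal]
  unfold Matrix.IsHermitian
  rw [Matrix.conjTranspose_sum]
  exact Finset.sum_congr rfl fun k _ => hk k

theorem sdp_le_atomicNorm (m : ℕ) (hm : 1 ≤ m) (N : ℕ) (hN : N = 2 * m + 1)
    (Ts : ℝ) (hTs : 0 < Ts) (Nr Nt : ℕ) (hNr : 1 ≤ Nr) (hNt : 1 ≤ Nt)
    (M : Matrix (Fin (m + 1) × Fin Nr) (Fin (m + 1) × Fin Nt) ℂ)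
    (hM : (atomicDecompSums m Nr Nt N Ts M).Nonempty) :
    sInf (sdpVals m Nr Nt M) ≤ sInf (atomicDecompSums m Nr Nt N Ts M) := by
  have hbdd : BddBelow (sdpVals m Nr Nt M) := by
    refine ⟨0, ?_⟩
    rintro s ⟨TU, TV, hTUh, hTVh, _, _, hPSD, rfl⟩
    have hTU : TU.PosSemidef := by
      have h := hPSD.submatrix Sum.inl
      have e : (Matrix.fromBlocks TU M M.conjTranspose TV).submatrix Sum.inl Sum.inl = TU := by
        ext i j; simp [Matrix.fromBlocks]
      rwa [e] at h
    have hTV : TV.PosSemidef := by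
      have h := hPSD.submatrix Sum.inr
      have e : (Matrix.fromBlocks TU M M.conjTranspose TV).submatrix Sum.inr Sum.inr = TV := by
        ext i j; simp [Matrix.fromBlocks]
      rwa [e] at h
    have h1 := psd_trace_re_nonneg' hTU
    have h2 := psd_trace_re_nonneg' hTV
    have e : ((TU.trace + TV.trace) / 2).re = (TU.trace.re + TV.trace.re) / 2 := by
      have : (2 : ℂ) = ((2:ℝ) : ℂ) := by norm_num
      rw [this, Complex.div_ofReal_re, Complex.add_re]
    rw [e]
    linarith
  refine le_csInf hM ?_
  rintro s ⟨n, l, τ, fr, ft, hτ, hfr, hft, hMdec, rfl⟩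
  refine le_trans (csInf_le hbdd ?_) le_rfl
  refine ⟨∑ k, ((‖l k‖ : ℝ) : ℂ) •
      Matrix.vecMulVec (chiVec m Nr N Ts (τ k) (fr k)) (star (chiVec m Nr N Ts (τ k) (fr k))),
    ∑ k, ((‖l k‖ : ℝ) : ℂ) •
      Matrix.vecMulVec (zetaVec m Nt N Ts (τ k) (ft k)) (star (zetaVec m Nt N Ts (τ k) (ft k))),
    isHermitian_sum_smul' _ _, isHermitian_sum_smul' _ _, ?_, ?_, ?_, ?_⟩
  · -- Toeplitz TU
    intro i1 j1 i1' j1' i2 j2 i2' j2' h1 h2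
    simp only [Matrix.sum_apply, Matrix.smul_apply, Matrix.vecMulVec_apply, Pi.star_apply,
      smul_eq_mul, Complex.star_def]
    refine Finset.sum_congr rfl fun k _ => ?_
    congr 1
    have e1 : (i1:ℝ) - (j1:ℝ) = (i1':ℝ) - (j1':ℝ) := by exact_mod_cast h1
    have e2 : (i2:ℝ) - (j2:ℝ) = (i2':ℝ) - (j2':ℝ) := by exact_mod_cast h2
    show (xiVec m N Ts (τ k) i1 * steerVec Nr (fr k) i2) *
        (starRingEnd ℂ) (xiVec m N Ts (τ k) j1 * steerVec Nr (fr k) j2) =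
      (xiVec m N Ts (τ k) i1' * steerVec Nr (fr k) i2') *
        (starRingEnd ℂ) (xiVec m N Ts (τ k) j1' * steerVec Nr (fr k) j2')
    rw [_root_.map_mul, _root_.map_mul]
    linear_combination (steerVec Nr (fr k) i2 * (starRingEnd ℂ) (steerVec Nr (fr k) j2)) *
        xi_diff m N Ts (τ k) e1 +
      (xiVec m N Ts (τ k) i1' * (starRingEnd ℂ) (xiVec m N Ts (τ k) j1')) *
        steer_diff Nr (fr k) e2
  · -- Toeplitz TV
    intro i1 j1 i1' j1' i2 j2 i2' j2' h1 h2
    simp only [Matrix.sum_apply, Matrix.smul_apply, Matrix.vecMulVec_apply, Pi.star_apply,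
      smul_eq_mul, Complex.star_def]
    refine Finset.sum_congr rfl fun k _ => ?_
    congr 1
    have e1 : (i1:ℝ) - (j1:ℝ) = (i1':ℝ) - (j1':ℝ) := by exact_mod_cast h1
    have e2 : (i2:ℝ) - (j2:ℝ) = (i2':ℝ) - (j2':ℝ) := by exact_mod_cast h2
    show (xiVec m N Ts (-(τ k)) i1 * steerVec Nt (ft k) i2) *
        (starRingEnd ℂ) (xiVec m N Ts (-(τ k)) j1 * steerVec Nt (ft k) j2) =
      (xiVec m N Ts (-(τ k)) i1' * steerVec Nt (ft k) i2') *
        (starRingEnd ℂ) (xiVec m N Ts (-(τ k)) j1' * steerVec Nt (ft k) j2')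
    rw [_root_.map_mul, _root_.map_mul]
    linear_combination (steerVec Nt (ft k) i2 * (starRingEnd ℂ) (steerVec Nt (ft k) j2)) *
        xi_diff m N Ts (-(τ k)) e1 +
      (xiVec m N Ts (-(τ k)) i1' * (starRingEnd ℂ) (xiVec m N Ts (-(τ k)) j1')) *
        steer_diff Nt (ft k) e2
  · -- PSD
    rw [hMdec]
    have hatom : ∀ k, atomMat m Nr Nt N Ts (τ k) (fr k) (ft k) =
        Matrix.vecMulVec (chiVec m Nr N Ts (τ k) (fr k))
          (fun q => (starRingEnd ℂ) (zetaVec m Nt N Ts (τ k) (ft k) q)) := fun k => rfl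
    simp only [hatom]
    rw [fromBlocks_eq_sum_outer l (fun k => chiVec m Nr N Ts (τ k) (fr k))
      (fun k => zetaVec m Nt N Ts (τ k) (ft k))]
    exact posSemidef_sum' _ fun k => posSemidef_vecMulVec_star' _
  · -- trace value
    have trU : (∑ k, ((‖l k‖ : ℝ) : ℂ) •
        Matrix.vecMulVec (chiVec m Nr N Ts (τ k) (fr k))
          (star (chiVec m Nr N Ts (τ k) (fr k)))).trace
        = (((∑ k, ‖l k‖) : ℝ) : ℂ) := by
      rw [Matrix.trace_sum]
      push_cast
      refine Finset.sum_congr rfl fun k _ => ?_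
      rw [Matrix.trace_smul]
      have h1 : (Matrix.vecMulVec (chiVec m Nr N Ts (τ k) (fr k))
          (star (chiVec m Nr N Ts (τ k) (fr k)))).trace = 1 := by
        rw [Matrix.trace]
        simpa [Matrix.diag, Matrix.vecMulVec_apply, chiVec, Complex.star_def]
          using prodvec_trace m Nr N hN hNr Ts (τ k) (fr k)
      rw [h1, smul_eq_mul, mul_one]
    have trV : (∑ k, ((‖l k‖ : ℝ) : ℂ) •
        Matrix.vecMulVec (zetaVec m Nt N Ts (τ k) (ft k))
          (star (zetaVec m Nt N Ts (τ k) (ft k)))).trace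
        = (((∑ k, ‖l k‖) : ℝ) : ℂ) := by
      rw [Matrix.trace_sum]
      push_cast
      refine Finset.sum_congr rfl fun k _ => ?_
      rw [Matrix.trace_smul]
      have h1 : (Matrix.vecMulVec (zetaVec m Nt N Ts (τ k) (ft k))
          (star (zetaVec m Nt N Ts (τ k) (ft k)))).trace = 1 := by
        rw [Matrix.trace]
        simpa [Matrix.diag, Matrix.vecMulVec_apply, zetaVec, Complex.star_def]
          using prodvec_trace m Nt N hN hNt Ts (-(τ k)) (ft k)
      rw [h1, smul_eq_mul, mul_one]
    rw [trU, trV]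
    have e : ((((∑ k, ‖l k‖) : ℝ) : ℂ) + (((∑ k, ‖l k‖) : ℝ) : ℂ)) / 2
        = (((∑ k, ‖l k‖) : ℝ) : ℂ) := by ring
    rw [e, Complex.ofReal_re]
end
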